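/- Let K be a connected simplicial complex whose 1-skeleton is a chordal graph. Then the simplicial complex K ∪ MF_{≥3}(K), obtained from K by filling in all missing faces of size ≥ 3, is simply connected. -/

import Mathlib

/-!
STATEMENT 18: let `K` be a finite connected simplicial complex whose 1-skeleton is a chordal
graph.  Then the complex `K ∪ MF_{≥3}(K)`, obtained from `K` by filling in all missing faces
of size ≥ 3, is simply connected (its geometric realization is a simply connected space).
-/

/-- The geometric realization of a simplicial complex `K` on `[m]`, as a subspace of `ℝ^m`:
convex combinations of vertices supported on a face of `K`. -/
def realization {m : ℕ} (K : Finset (Finset (Fin m))) : Set (Fin m → ℝ) :=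
  {f | (∀ i, 0 ≤ f i) ∧ (∑ i, f i = 1) ∧ ∃ σ ∈ K, ∀ i, f i ≠ 0 → i ∈ σ}

/-- `I` is a missing face of `K`. -/
def IsMissingFace {m : ℕ} (K : Finset (Finset (Fin m))) (I : Finset (Fin m)) : Prop :=
  I ∉ K ∧ ∀ J ⊂ I, J ∈ K

instance {m : ℕ} (K : Finset (Finset (Fin m))) : DecidablePred (IsMissingFace K) :=
  fun I => inferInstanceAs (Decidable (I ∉ K ∧ ∀ J ⊂ I, J ∈ K))

/-- The complex obtained from `K` by filling in all missing faces of size at least 3. -/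
def fillMF3 {m : ℕ} (K : Finset (Finset (Fin m))) : Finset (Finset (Fin m)) :=
  K ∪ (Finset.univ : Finset (Finset (Fin m))).filter
    (fun I => 3 ≤ I.card ∧ IsMissingFace K I)

namespace Stmt18

variable {m : ℕ}

/-- Points of the closed simplex on vertex set `σ`. -/
def facePts (σ : Finset (Fin m)) : Set (Fin m → ℝ) :=
  {f | (∀ i, 0 ≤ f i) ∧ (∑ i, f i = 1) ∧ ∀ i, f i ≠ 0 → i ∈ σ}

lemma convex_facePts (σ : Finset (Fin m)) : Convex ℝ (facePts σ) := by
  intro x hx y hy a b ha hb hab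
  refine ⟨fun i => ?_, ?_, ?_⟩
  · have h1 := hx.1 i; have h2 := hy.1 i
    have : (a • x + b • y) i = a * x i + b * y i := by simp
    rw [this]; positivity
  · simp only [Pi.add_apply, Pi.smul_apply, smul_eq_mul]
    rw [Finset.sum_add_distrib, ← Finset.mul_sum, ← Finset.mul_sum, hx.2.1, hy.2.1]
    linarith
  · intro i hi
    by_contra hiσ
    have hxi : x i = 0 := by_contra fun h => hiσ (hx.2.2 i h)
    have hyi : y i = 0 := by_contra fun h => hiσ (hy.2.2 i h)
    simp [hxi, hyi] at hi

lemma facePts_subset {L : Finset (Finset (Fin m))} {σ : Finset (Fin m)} (h : σ ∈ L) :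
    facePts σ ⊆ realization L := fun f hf => ⟨hf.1, hf.2.1, σ, h, hf.2.2⟩

lemma mem_facePts {L : Finset (Finset (Fin m))} {x : Fin m → ℝ} (hx : x ∈ realization L)
    {σ : Finset (Fin m)} (hsupp : ∀ i, x i ≠ 0 → i ∈ σ) : x ∈ facePts σ :=
  ⟨hx.1, hx.2.1, hsupp⟩

/-- The vertex point. -/
def ept (v : Fin m) : Fin m → ℝ := fun i => if i = v then 1 else 0

lemma ept_mem_facePts {v : Fin m} {σ : Finset (Fin m)} (h : v ∈ σ) : ept v ∈ facePts σ := by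
  refine ⟨fun i => by dsimp [ept]; split <;> norm_num, ?_, fun i hi => ?_⟩
  · simp [ept]
  · dsimp [ept] at hi
    rcases eq_or_ne i v with rfl | hne
    · exact h
    · simp [hne] at hi

lemma exists_support_index {L : Finset (Finset (Fin m))} {x : Fin m → ℝ}
    (hx : x ∈ realization L) : ∃ i, x i ≠ 0 := by
  by_contra h
  push_neg at h
  have := hx.2.1
  simp [h] at this

/-- The open star of `v`, as a subset of the realization. -/
def starPts (L : Finset (Finset (Fin m))) (v : Fin m) : Set (Fin m → ℝ) :=
  realization L ∩ {f | f v ≠ 0}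

lemma starConvex_starPts {L : Finset (Finset (Fin m))} (v : Fin m) :
    StarConvex ℝ (ept v) (starPts L v) := by
  intro y hy a b ha hb hab
  obtain ⟨⟨hy0, hy1, σ, hσ, hyσ⟩, hyv⟩ := hy
  have hvσ : v ∈ σ := hyσ v hyv
  have hyv' : 0 < y v := lt_of_le_of_ne (hy0 v) (Ne.symm hyv)
  have hmem : a • ept v + b • y ∈ facePts σ :=
    convex_facePts σ (ept_mem_facePts hvσ) ⟨hy0, hy1, hyσ⟩ ha hb hab
  refine ⟨facePts_subset hσ hmem, ?_⟩
  have : (a • ept v + b • y) v = a + b * y v := by simp [ept]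
  rw [Set.mem_setOf_eq, this]
  rcases eq_or_lt_of_le ha with h0 | h0
  · have hb1 : b = 1 := by linarith
    rw [← h0, hb1]; simp only [zero_add, one_mul]; exact ne_of_gt hyv'
  · positivity

/-- Straight-line segment function. -/
def seg (x y : Fin m → ℝ) (t : ℝ) : Fin m → ℝ := fun i => (1 - t) * x i + t * y i

lemma seg_mem_facePts {σ : Finset (Fin m)} {x y : Fin m → ℝ} (hx : x ∈ facePts σ)
    (hy : y ∈ facePts σ) {t : ℝ} (h0 : 0 ≤ t) (h1 : t ≤ 1) : seg x y t ∈ facePts σ := by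
  have h := convex_facePts σ hx hy (by linarith : (0:ℝ) ≤ 1 - t) h0 (by ring)
  have hxy : seg x y t = (1 - t) • x + t • y := by funext i; simp [seg]
  rw [hxy]; exact h

lemma continuous_seg (x y : Fin m → ℝ) : Continuous fun t : unitInterval => seg x y t := by
  refine continuous_pi fun i => ?_
  simp only [seg]
  fun_prop

/-- The segment path inside the realization. -/
def segPath {L : Finset (Finset (Fin m))} (x y : ↥(realization L))
    (h : ∀ t : unitInterval, seg x.1 y.1 t ∈ realization L) : Path x y where
  toFun t := ⟨seg x.1 y.1 t, h t⟩
  continuous_toFun := Continuous.subtype_mk (continuous_seg _ _) _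
  source' := by
    apply Subtype.ext
    show seg _ _ (0:ℝ) = x.1
    funext i; simp [seg]
  target' := by
    apply Subtype.ext
    show seg _ _ ((1:unitInterval):ℝ) = y.1
    funext i; simp [seg]

lemma segPath_apply {L : Finset (Finset (Fin m))} (x y : ↥(realization L))
    (h : ∀ t : unitInterval, seg x.1 y.1 t ∈ realization L) (t : unitInterval) :
    (segPath x y h t).1 = seg x.1 y.1 t := rfl

/-- Any two paths inside a star-convex subset of the realization are homotopic. -/
lemma homotopic_in_subset {B : Set (Fin m → ℝ)} {A : Set (Fin m → ℝ)} (hAB : A ⊆ B)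
    (c : Fin m → ℝ) (hc : c ∈ A) (hstar : StarConvex ℝ c A) {x y : ↥B}
    (p q : Path x y) (hp : ∀ t, (p t).1 ∈ A) (hq : ∀ t, (q t).1 ∈ A) :
    Path.Homotopic p q := by
  haveI : ContractibleSpace ↥A := hstar.contractibleSpace ⟨c, hc⟩
  have hx : x.1 ∈ A := by have := hp 0; rwa [p.source] at this
  have hy : y.1 ∈ A := by have := hp 1; rwa [p.target] at this
  let x' : ↥A := ⟨x.1, hx⟩
  let y' : ↥A := ⟨y.1, hy⟩
  let p' : Path x' y' :=
    ⟨⟨fun t => ⟨(p t).1, hp t⟩, by fun_prop⟩,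
      Subtype.ext (by simp [x']), Subtype.ext (by simp [y'])⟩
  let q' : Path x' y' :=
    ⟨⟨fun t => ⟨(q t).1, hq t⟩, by fun_prop⟩,
      Subtype.ext (by simp [x']), Subtype.ext (by simp [y'])⟩
  have hpq : p'.Homotopic q' := SimplyConnectedSpace.paths_homotopic p' q'
  let ι : C(↥A, ↥B) := ⟨fun a => ⟨a.1, hAB a.2⟩, by fun_prop⟩
  have h2 := Path.Homotopic.map hpq ι
  have hp2 : p'.map ι.continuous = p.cast (Subtype.ext rfl) (Subtype.ext rfl) := by
    ext t
    rfl
  have hq2 : q'.map ι.continuous = q.cast (Subtype.ext rfl) (Subtype.ext rfl) := by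
    ext t
    rfl
  rw [hp2, hq2] at h2
  exact h2

section Trunc

open unitInterval

variable {X : Type*} [TopologicalSpace X] {x y : X}

/-- Truncation of a path between two parameter values, as a path between the
corresponding points. -/
noncomputable def truncP (p : Path x y) (a b : unitInterval) (hab : a ≤ b) : Path (p a) (p b) :=
  (p.truncate a b).cast
    (by rw [min_eq_left (Subtype.coe_le_coe.2 hab), p.extend_extends'])
    (p.extend_extends' b).symm

lemma truncP_coe (p : Path x y) (a b : unitInterval) (hab : a ≤ b) (s : unitInterval) :
    truncP p a b hab s = p.extend (min (max ↑s ↑a) ↑b) := rfl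

lemma truncP_apply (p : Path x y) (a b : unitInterval) (hab : a ≤ b) (s : unitInterval) :
    ∃ u : unitInterval, a ≤ u ∧ u ≤ b ∧ truncP p a b hab s = p u := by
  have h1 : (0:ℝ) ≤ min (max ↑s ↑a) ↑b := le_min (le_trans a.2.1 (le_max_right _ _)) b.2.1
  have h2 : min (max ↑s ↑a) ↑b ≤ 1 := le_trans (min_le_right _ _) b.2.2
  refine ⟨⟨min (max ↑s ↑a) ↑b, h1, h2⟩, ?_, ?_, ?_⟩
  · exact Subtype.coe_le_coe.1 (le_min (le_max_right _ _) (Subtype.coe_le_coe.2 hab))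
  · exact Subtype.coe_le_coe.1 (min_le_right _ _)
  · rw [truncP_coe]
    exact p.extend_apply ⟨h1, h2⟩

/-- The reparametrisation used to split a truncated path. -/
def truncF (b : unitInterval) (u : unitInterval) : unitInterval :=
  ⟨max (min (2 * ↑u) ↑b) (2 * ↑u - 1),
    le_max_of_le_left (le_min (by have := u.2.1; linarith) b.2.1),
    max_le (le_trans (min_le_right _ _) b.2.2) (by have := u.2.2; linarith)⟩

lemma truncF_continuous (b : unitInterval) : Continuous (truncF b) := by
  apply Continuous.subtype_mk
  fun_prop

lemma truncF_zero (b : unitInterval) : truncF b 0 = 0 := by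
  apply Subtype.ext
  show max (min (2 * (0:ℝ)) ↑b) (2 * (0:ℝ) - 1) = 0
  rw [mul_zero, min_eq_left b.2.1]
  norm_num

lemma truncF_one (b : unitInterval) : truncF b 1 = 1 := by
  apply Subtype.ext
  show max (min (2 * (1:ℝ)) ↑b) (2 * (1:ℝ) - 1) = 1
  rw [min_eq_right (by have := b.2.2; linarith)]
  rw [max_eq_right (by have := b.2.2; linarith)]
  norm_num

lemma truncP_split (p : Path x y) (a b c : unitInterval) (hab : a ≤ b) (hbc : b ≤ c) :
    (truncP p a b hab).trans (truncP p b c hbc) =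
      (truncP p a c (hab.trans hbc)).reparam (truncF b) (truncF_continuous b)
        (truncF_zero b) (truncF_one b) := by
  have hab' : (a:ℝ) ≤ b := hab
  have hbc' : (b:ℝ) ≤ c := hbc
  ext u
  rw [Path.trans_apply]
  have hb0 := b.2.1
  have hb1 := b.2.2
  have hu0 := u.2.1
  have hu1 := u.2.2
  have ha0 := a.2.1
  have hc1 := c.2.2
  split_ifs with h
  · show p.extend (min (max (2 * (u:ℝ)) (a:ℝ)) (b:ℝ)) =
      p.extend (min (max ((truncF b u : unitInterval) : ℝ) (a:ℝ)) (c:ℝ))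
    congr 1
    show min (max (2 * (u:ℝ)) (a:ℝ)) (b:ℝ) =
      min (max (max (min (2*(u:ℝ)) (b:ℝ)) (2*(u:ℝ)-1)) (a:ℝ)) (c:ℝ)
    simp only [min_def, max_def]
    split_ifs <;> linarith
  · show p.extend (min (max (2 * (u:ℝ) - 1) (b:ℝ)) (c:ℝ)) =
      p.extend (min (max ((truncF b u : unitInterval) : ℝ) (a:ℝ)) (c:ℝ))
    congr 1
    show min (max (2 * (u:ℝ) - 1) (b:ℝ)) (c:ℝ) =
      min (max (max (min (2*(u:ℝ)) (b:ℝ)) (2*(u:ℝ)-1)) (a:ℝ)) (c:ℝ)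
    simp only [min_def, max_def]
    split_ifs <;> linarith

end Trunc

section Complex

variable {K : Finset (Finset (Fin m))}

lemma mem_fillMF3 {σ : Finset (Fin m)} :
    σ ∈ fillMF3 K ↔ σ ∈ K ∨ (3 ≤ σ.card ∧ IsMissingFace K σ) := by
  simp [fillMF3]

lemma mem_fillMF3_of_mem {σ : Finset (Fin m)} (h : σ ∈ K) : σ ∈ fillMF3 K :=
  mem_fillMF3.2 (Or.inl h)

variable (hdown : ∀ σ ∈ K, ∀ τ ⊆ σ, τ ∈ K)

include hdown in
lemma fillMF3_down : ∀ σ ∈ fillMF3 K, ∀ τ ⊆ σ, τ ∈ fillMF3 K := by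
  intro σ hσ τ hτ
  rcases mem_fillMF3.1 hσ with h | ⟨_, hmf⟩
  · exact mem_fillMF3_of_mem (hdown σ h τ hτ)
  · rcases eq_or_ne τ σ with rfl | hne
    · exact hσ
    · exact mem_fillMF3_of_mem (hmf.2 τ (Finset.ssubset_iff_subset_ne.2 ⟨hτ, hne⟩))

lemma pair_card_le (v w : Fin m) : ({v, w} : Finset (Fin m)).card ≤ 2 := by
  refine le_trans (Finset.card_insert_le _ _) ?_
  simp

lemma edge_fillMF3 {v w : Fin m} : ({v, w} : Finset (Fin m)) ∈ fillMF3 K ↔ {v, w} ∈ K := by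
  constructor
  · intro h
    rcases mem_fillMF3.1 h with h | ⟨hc, _⟩
    · exact h
    · exact absurd (le_trans hc (pair_card_le v w)) (by norm_num)
  · exact mem_fillMF3_of_mem

include hdown in
lemma tri_fillMF3 {v w u : Fin m} (hvw : ({v, w} : Finset (Fin m)) ∈ K)
    (hwu : ({w, u} : Finset (Fin m)) ∈ K) (hvu : ({v, u} : Finset (Fin m)) ∈ K) :
    ({v, w, u} : Finset (Fin m)) ∈ fillMF3 K := by
  by_cases h : ({v, w, u} : Finset (Fin m)) ∈ K
  · exact mem_fillMF3_of_mem h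
  · rcases eq_or_ne v w with rfl | hvw'
    · exact absurd (by simpa using hwu) h
    · rcases eq_or_ne w u with rfl | hwu'
      · exact absurd (by rw [show ({v, w, w} : Finset (Fin m)) = {v, w} from by ext b; simp]; exact hvw) h
      · rcases eq_or_ne v u with rfl | hvu'
        · exact absurd (by rw [show ({v, w, v} : Finset (Fin m)) = {v, w} from by ext b; simp; tauto]; exact hvw) h
        · refine mem_fillMF3.2 (Or.inr ⟨?_, h, ?_⟩)
          · rw [Finset.card_insert_of_notMem (by simp [hvw', hvu']),
              Finset.card_insert_of_notMem (by simp [hwu'])]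
            simp
          · intro J hJ
            have hJsub := hJ.subset
            obtain ⟨a, haI, haJ⟩ := Finset.exists_of_ssubset hJ
            have hsub : ∀ b ∈ J, b = v ∨ b = w ∨ b = u := by
              intro b hb
              have := hJsub hb
              simpa using this
            rcases (by simpa using haI : a = v ∨ a = w ∨ a = u) with rfl | rfl | rfl
            · refine hdown _ hwu J ?_
              intro b hb
              rcases hsub b hb with rfl | rfl | rfl
              · exact absurd hb haJ
              · simp
              · simp
            · refine hdown _ hvu J ?_
              intro b hb
              rcases hsub b hb with rfl | rfl | rfl
              · simp
              · exact absurd hb haJ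
              · simp
            · refine hdown _ hvw J ?_
              intro b hb
              rcases hsub b hb with rfl | rfl | rfl
              · simp
              · simp
              · exact absurd hb haJ

end Complex

section Paths

variable {K : Finset (Finset (Fin m))}

lemma realization_mono {K L : Finset (Finset (Fin m))} (h : K ⊆ L) :
    realization K ⊆ realization L := by
  rintro f ⟨h0, h1, σ, hσ, hs⟩
  exact ⟨h0, h1, σ, h hσ, hs⟩

lemma facePts_mono {σ τ : Finset (Fin m)} (h : σ ⊆ τ) : facePts σ ⊆ facePts τ :=
  fun f hf => ⟨hf.1, hf.2.1, fun i hi => h (hf.2.2 i hi)⟩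

variable (K) in
/-- The realization of the filled complex. -/
abbrev Real3 : Type := ↥(realization (fillMF3 K))

variable (hvert : ∀ i : Fin m, ({i} : Finset (Fin m)) ∈ K)

/-- The vertex `v` as a point of the realization. -/
def vpt (hvert : ∀ i : Fin m, ({i} : Finset (Fin m)) ∈ K) (v : Fin m) : Real3 K :=
  ⟨ept v, facePts_subset (mem_fillMF3_of_mem (hvert v))
    (ept_mem_facePts (Finset.mem_singleton_self v))⟩

lemma vpt_coord (v i : Fin m) : (vpt hvert v).1 i = if i = v then 1 else 0 := rfl

/-- A supporting face for a point of the realization. -/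
noncomputable def suppFace (z : Real3 K) : Finset (Fin m) := z.2.2.2.choose

lemma suppFace_mem (z : Real3 K) : suppFace z ∈ fillMF3 K := z.2.2.2.choose_spec.1

lemma mem_suppFace (z : Real3 K) : ∀ i, z.1 i ≠ 0 → i ∈ suppFace z :=
  z.2.2.2.choose_spec.2

lemma mem_facePts_suppFace (z : Real3 K) : z.1 ∈ facePts (suppFace z) :=
  ⟨z.2.1, z.2.2.1, mem_suppFace z⟩

/-- The straight path from a point to a vertex of its support ("spoke"). -/
noncomputable def spoke (z : Real3 K) (v : Fin m) (hz : z.1 v ≠ 0) :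
    Path z (vpt hvert v) :=
  segPath z (vpt hvert v) (fun t =>
    facePts_subset (suppFace_mem z)
      (seg_mem_facePts (mem_facePts_suppFace z)
        (ept_mem_facePts (mem_suppFace z v hz)) t.2.1 t.2.2))

lemma spoke_apply (z : Real3 K) (v : Fin m) (hz : z.1 v ≠ 0) (t : unitInterval) :
    (spoke hvert z v hz t).1 = seg z.1 (ept v) t := rfl

lemma spoke_mem_star (z : Real3 K) (v : Fin m) (hz : z.1 v ≠ 0) (t : unitInterval) :
    (spoke hvert z v hz t).1 ∈ starPts (fillMF3 K) v := by
  refine ⟨(spoke hvert z v hz t).2, ?_⟩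
  show seg z.1 (ept v) t v ≠ 0
  have hzv : 0 < z.1 v := lt_of_le_of_ne (z.2.1 v) (Ne.symm hz)
  have h1 : seg z.1 (ept v) t v = (1 - t) * z.1 v + t := by simp [seg, ept]
  rw [h1]
  rcases eq_or_lt_of_le t.2.1 with h0 | h0
  · rw [← h0]; simpa using ne_of_gt hzv
  · have : (0:ℝ) ≤ (1 - t) * z.1 v := mul_nonneg (by have := t.2.2; linarith) hzv.le
    positivity

/-- The straight path between two adjacent vertices. -/
noncomputable def epath {v w : Fin m} (h : ({v, w} : Finset (Fin m)) ∈ K) :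
    Path (vpt hvert v) (vpt hvert w) :=
  segPath _ _ (fun t =>
    facePts_subset (mem_fillMF3_of_mem h)
      (seg_mem_facePts (ept_mem_facePts (Finset.mem_insert_self v {w}))
        (ept_mem_facePts (by simp)) t.2.1 t.2.2))

lemma epath_mem_facePts {v w : Fin m} (h : ({v, w} : Finset (Fin m)) ∈ K)
    {σ : Finset (Fin m)} (hv : v ∈ σ) (hw : w ∈ σ) (t : unitInterval) :
    (epath hvert h t).1 ∈ facePts σ :=
  seg_mem_facePts (ept_mem_facePts hv) (ept_mem_facePts hw) t.2.1 t.2.2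

section PathConn

variable (hconn : ConnectedSpace ↥(realization K))

/-- Inclusion of the realization of `K` into that of the filled complex. -/
def incl (y : ↥(realization K)) : Real3 K :=
  ⟨y.1, realization_mono Finset.subset_union_left y.2⟩

lemma continuous_incl : Continuous (incl (K := K)) := by
  refine Continuous.subtype_mk ?_ _
  exact continuous_subtype_val

lemma joined_spoke (z : Real3 K) (v : Fin m) (hz : z.1 v ≠ 0) :
    Joined z (vpt hvert v) := ⟨spoke hvert z v hz⟩

include hvert hconn in
lemma joined_incl (y y' : ↥(realization K)) : Joined (incl y) (incl y') := by
  have hloc : ∀ y₀ : ↥(realization K), ∃ N : Set ↥(realization K),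
      IsOpen N ∧ y₀ ∈ N ∧ ∀ z ∈ N, Joined (incl z) (incl y₀) := by
    intro y₀
    obtain ⟨v, hv⟩ := exists_support_index (realization_mono (Finset.subset_union_left
      (s₂ := (Finset.univ : Finset (Finset (Fin m))).filter
        (fun I => 3 ≤ I.card ∧ IsMissingFace K I))) y₀.2)
    refine ⟨{z | z.1 v ≠ 0}, ?_, hv, fun z hz => ?_⟩
    · have : Continuous fun z : ↥(realization K) => z.1 v :=
        (continuous_apply v).comp continuous_subtype_val
      exact isOpen_ne.preimage this
    · exact (joined_spoke hvert (incl z) v hz).trans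
        (joined_spoke hvert (incl y₀) v hv).symm
  set T := {z : ↥(realization K) | Joined (incl z) (incl y)} with hT
  have hopen : IsOpen T := by
    rw [isOpen_iff_mem_nhds]
    intro z hzT
    obtain ⟨N, hNo, hzN, hNj⟩ := hloc z
    exact Filter.mem_of_superset (hNo.mem_nhds hzN)
      (fun w hw => (hNj w hw).trans hzT)
  have hclosed : IsClosed T := by
    rw [← isOpen_compl_iff, isOpen_iff_mem_nhds]
    intro z hzT
    obtain ⟨N, hNo, hzN, hNj⟩ := hloc z
    refine Filter.mem_of_superset (hNo.mem_nhds hzN) (fun w hw hwT => hzT ?_)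
    exact ((hNj w hw).symm.trans hwT : Joined (incl z) (incl y))
  have : T = Set.univ := IsClopen.eq_univ ⟨hclosed, hopen⟩ ⟨y, Joined.refl _⟩
  have h' : y' ∈ T := this ▸ (Set.mem_univ y')
  exact h'.symm

include hvert hconn in
lemma pathConnected_real3 : PathConnectedSpace (Real3 K) := by
  have hx₀ : Nonempty ↥(realization K) := hconn.toNonempty
  obtain ⟨y₀⟩ := hx₀
  constructor
  · exact ⟨incl y₀⟩
  · intro x y
    obtain ⟨v, hv⟩ := exists_support_index x.2
    obtain ⟨w, hw⟩ := exists_support_index y.2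
    have h1 : Joined x (vpt hvert v) := joined_spoke hvert x v hv
    have h2 : Joined y (vpt hvert w) := joined_spoke hvert y w hw
    have hv' : incl ⟨ept v, facePts_subset (hvert v)
        (ept_mem_facePts (Finset.mem_singleton_self v))⟩ = vpt hvert v := rfl
    have hw' : incl ⟨ept w, facePts_subset (hvert w)
        (ept_mem_facePts (Finset.mem_singleton_self w))⟩ = vpt hvert w := rfl
    have h3 := joined_incl hvert hconn ⟨ept v, facePts_subset (hvert v)
        (ept_mem_facePts (Finset.mem_singleton_self v))⟩
      ⟨ept w, facePts_subset (hvert w) (ept_mem_facePts (Finset.mem_singleton_self w))⟩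
    rw [hv', hw'] at h3
    exact (h1.trans h3).trans h2.symm

end PathConn

end Paths

section FG

open CategoryTheory

attribute [local instance] Path.Homotopic.setoid

variable {K : Finset (Finset (Fin m))}

/-- Promote a path to a morphism of the fundamental groupoid. -/
def toH {x y : Real3 K} (p : Path x y) :
    FundamentalGroupoid.mk x ⟶ FundamentalGroupoid.mk y := ⟦p⟧

lemma toH_trans {x y z : Real3 K} (p : Path x y) (q : Path y z) :
    toH (p.trans q) = toH p ≫ toH q :=
  Path.Homotopic.Quotient.mk_trans p q

lemma toH_refl (x : Real3 K) : toH (Path.refl x) = 𝟙 (FundamentalGroupoid.mk x) := rfl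

lemma toH_homotopic {x y : Real3 K} {p q : Path x y} (h : p.Homotopic q) : toH p = toH q :=
  Quotient.sound h

lemma toH_symm_comp {x y : Real3 K} (p : Path x y) :
    toH p.symm ≫ toH p = 𝟙 (FundamentalGroupoid.mk y) := by
  rw [← toH_trans]
  exact toH_homotopic ⟨(Path.Homotopy.reflSymmTrans p).symm⟩

lemma toH_comp_symm {x y : Real3 K} (p : Path x y) :
    toH p ≫ toH p.symm = 𝟙 (FundamentalGroupoid.mk x) := by
  rw [← toH_trans]
  exact toH_homotopic ⟨(Path.Homotopy.reflTransSymm p).symm⟩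

variable (hvert : ∀ i : Fin m, ({i} : Finset (Fin m)) ∈ K)
variable (hpc : PathConnectedSpace (Real3 K))

/-- The morphism of the fundamental groupoid associated to an edge (with junk value
if the pair is not an edge). -/
noncomputable def eHom (v w : Fin m) :
    FundamentalGroupoid.mk (vpt hvert v) ⟶ FundamentalGroupoid.mk (vpt hvert w) :=
  if h : ({v, w} : Finset (Fin m)) ∈ K then toH (epath hvert h)
  else toH (hpc.joined _ _).somePath

lemma eHom_eq {v w : Fin m} (h : ({v, w} : Finset (Fin m)) ∈ K) :
    eHom hvert hpc v w = toH (epath hvert h) := dif_pos h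

/-- The morphism of the fundamental groupoid associated to a walk `v :: l ++ [w]`. -/
noncomputable def wHom : (l : List (Fin m)) → (v w : Fin m) →
    (FundamentalGroupoid.mk (vpt hvert v) ⟶ FundamentalGroupoid.mk (vpt hvert w))
  | [], v, w => eHom hvert hpc v w
  | a :: l, v, w => eHom hvert hpc v a ≫ wHom l a w

lemma wHom_nil (v w : Fin m) : wHom hvert hpc [] v w = eHom hvert hpc v w := rfl

lemma wHom_cons (a : Fin m) (l : List (Fin m)) (v w : Fin m) :
    wHom hvert hpc (a :: l) v w = eHom hvert hpc v a ≫ wHom hvert hpc l a w := rfl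

lemma wHom_append (l₁ l₂ : List (Fin m)) (a v w : Fin m) :
    wHom hvert hpc (l₁ ++ a :: l₂) v w = wHom hvert hpc l₁ v a ≫ wHom hvert hpc l₂ a w := by
  induction l₁ generalizing v with
  | nil => rfl
  | cons b l₁ ih =>
    rw [List.cons_append, wHom_cons, ih, wHom_cons, Category.assoc]

lemma wHom_concat (l : List (Fin m)) (a v w : Fin m) :
    wHom hvert hpc (l ++ [a]) v w = wHom hvert hpc l v a ≫ eHom hvert hpc a w := by
  rw [wHom_append, wHom_nil]

variable (hdown : ∀ σ ∈ K, ∀ τ ⊆ σ, τ ∈ K)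

lemma eHom_self (v : Fin m) : eHom hvert hpc v v = 𝟙 _ := by
  have h : ({v, v} : Finset (Fin m)) ∈ K := by
    rw [show ({v, v} : Finset (Fin m)) = {v} from by ext b; simp]; exact hvert v
  rw [eHom_eq hvert hpc h]
  have : epath hvert h = Path.refl (vpt hvert v) := by
    ext t i
    show seg (ept v) (ept v) t i = ept v i
    simp [seg]
    ring
  rw [this, toH_refl]

include hdown in
lemma eHom_comp {v w u : Fin m} (hvw : ({v, w} : Finset (Fin m)) ∈ K)
    (hwu : ({w, u} : Finset (Fin m)) ∈ K) (hvu : ({v, u} : Finset (Fin m)) ∈ K) :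
    eHom hvert hpc v w ≫ eHom hvert hpc w u = eHom hvert hpc v u := by
  rw [eHom_eq hvert hpc hvw, eHom_eq hvert hpc hwu, eHom_eq hvert hpc hvu, ← toH_trans]
  apply toH_homotopic
  have htri := tri_fillMF3 hdown hvw hwu hvu
  have hAB : facePts ({v, w, u} : Finset (Fin m)) ⊆ realization (fillMF3 K) :=
    facePts_subset htri
  have hvm : v ∈ ({v, w, u} : Finset (Fin m)) := by simp
  have hwm : w ∈ ({v, w, u} : Finset (Fin m)) := by simp
  have hum : u ∈ ({v, w, u} : Finset (Fin m)) := by simp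
  refine homotopic_in_subset hAB (ept v) (ept_mem_facePts hvm)
    ((convex_facePts _).starConvex (ept_mem_facePts hvm)) _ _ (fun t => ?_) (fun t => ?_)
  · have hmem : (epath hvert hvw).trans (epath hvert hwu) t ∈
        Set.range ((epath hvert hvw).trans (epath hvert hwu)) := Set.mem_range_self t
    rw [Path.trans_range] at hmem
    rcases hmem with ⟨s, hs⟩ | ⟨s, hs⟩
    · rw [← hs]; exact epath_mem_facePts hvert hvw hvm hwm s
    · rw [← hs]; exact epath_mem_facePts hvert hwu hwm hum s
  · exact epath_mem_facePts hvert hvu hvm hum t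

include hdown in
lemma eHom_cancel {v w : Fin m} (hvw : ({v, w} : Finset (Fin m)) ∈ K) :
    eHom hvert hpc v w ≫ eHom hvert hpc w v = 𝟙 _ := by
  have hwv : ({w, v} : Finset (Fin m)) ∈ K := by rwa [Finset.pair_comm]
  have hvv : ({v, v} : Finset (Fin m)) ∈ K := by
    rw [show ({v, v} : Finset (Fin m)) = {v} from by ext b; simp]; exact hvert v
  rw [eHom_comp hvert hpc hdown hvw hwv hvv, eHom_self]

section Walks

lemma chain_getElem {α : Type*} {R : α → α → Prop} :
    ∀ {a : α} {l : List α}, List.Chain R a l → ∀ j (hj : j + 1 < (a :: l).length),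
      R ((a :: l)[j]'(by omega)) ((a :: l)[j+1]'hj)
  | a, [], _, j, hj => by simp at hj
  | a, b :: t, h, 0, hj => by
      simp only [List.Chain, List.chain_cons] at h
      simpa using h.1
  | a, b :: t, h, j + 1, hj => by
      simp only [List.Chain, List.chain_cons] at h
      have := chain_getElem h.2 j (by simpa using hj)
      simpa using this

lemma exists_dup {α : Type*} : ∀ {l : List α}, ¬ l.Nodup →
    ∃ x l₁ l₂ l₃, l = l₁ ++ x :: l₂ ++ x :: l₃
  | [], h => absurd List.nodup_nil h
  | a :: t, h => by
      by_cases ha : a ∈ t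
      · obtain ⟨t₁, t₂, rfl⟩ := List.append_of_mem ha
        exact ⟨a, [], t₁, t₂, by simp⟩
      · have ht : ¬ t.Nodup := fun hn => h (List.nodup_cons.2 ⟨ha, hn⟩)
        obtain ⟨x, l₁, l₂, l₃, rfl⟩ := exists_dup ht
        exact ⟨x, a :: l₁, l₂, l₃, by simp⟩

variable (hchordal : ∀ n : ℕ, 4 ≤ n → ∀ f : ZMod n → Fin m, Function.Injective f →
      (∀ i : ZMod n, ({f i, f (i + 1)} : Finset (Fin m)) ∈ K) →
      ∃ i j : ZMod n, j ≠ i ∧ j ≠ i + 1 ∧ i ≠ j + 1 ∧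
        ({f i, f j} : Finset (Fin m)) ∈ K)

open CategoryTheory

lemma insert_inv2 {𝒞 : Type*} [Category 𝒞] {a c d e : 𝒞} (B : a ⟶ c) (D : c ⟶ d)
    {X : c ⟶ e} {Y : e ⟶ c} (h : X ≫ Y = 𝟙 c) :
    B ≫ D = (B ≫ X) ≫ (Y ≫ D) := by
  rw [Category.assoc, ← Category.assoc X Y D, h, Category.id_comp]

lemma insert_inv {𝒞 : Type*} [Category 𝒞] {a b c d e : 𝒞} (A : a ⟶ b) (B : b ⟶ c)
    (D : c ⟶ d) {X : c ⟶ e} {Y : e ⟶ c} (h : X ≫ Y = 𝟙 c) :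
    A ≫ B ≫ D = A ≫ (B ≫ X) ≫ (Y ≫ D) := by
  rw [insert_inv2 B D h]

include hdown hchordal in
lemma wHom_closed : ∀ (k : ℕ) (l : List (Fin m)) (v : Fin m), l.length ≤ k →
    List.Chain (fun a b => ({a, b} : Finset (Fin m)) ∈ K) v (l ++ [v]) →
    wHom hvert hpc l v v = 𝟙 _ := by
  intro k
  induction k with
  | zero =>
    intro l v hlen _
    rw [List.length_eq_zero_iff.1 (Nat.le_zero.1 hlen), wHom_nil]
    exact eHom_self hvert hpc v
  | succ k ih =>
    intro l v hlen hchain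
    by_cases hsmall : l.length ≤ 2
    · rcases l with _ | ⟨a, _ | ⟨b, _ | ⟨c, l'⟩⟩⟩
      · rw [wHom_nil]; exact eHom_self hvert hpc v
      · simp only [List.singleton_append, List.Chain, List.chain_cons] at hchain
        rw [wHom_cons, wHom_nil]
        exact eHom_cancel hvert hpc hdown hchain.1
      · simp only [List.cons_append, List.nil_append, List.Chain, List.chain_cons] at hchain
        obtain ⟨hva, hab, hbv, -⟩ := hchain
        rw [wHom_cons, wHom_cons, wHom_nil]
        have hav : ({a, v} : Finset (Fin m)) ∈ K := by rwa [Finset.pair_comm]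
        rw [eHom_comp hvert hpc hdown hab hbv hav]
        exact eHom_cancel hvert hpc hdown hva
      · simp at hsmall
    by_cases hnd : (v :: l).Nodup
    · -- simple cycle: use chordality
      have hl3 : 3 ≤ l.length := by omega
      have hN4 : 4 ≤ l.length + 1 := by omega
      haveI : NeZero (l.length + 1) := ⟨by omega⟩
      haveI : Fact (1 < l.length + 1) := ⟨by omega⟩
      have hclen : (v :: l).length = l.length + 1 := by simp
      set f : ZMod (l.length + 1) → Fin m :=
        fun i => (v :: l)[i.val]'(by rw [hclen]; exact ZMod.val_lt i) with hf
      have hinj : Function.Injective f := by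
        intro i j hij
        apply ZMod.val_injective
        have h2 : (v :: l).get ⟨i.val, by rw [hclen]; exact ZMod.val_lt i⟩ =
            (v :: l).get ⟨j.val, by rw [hclen]; exact ZMod.val_lt j⟩ := by
          simpa [List.get_eq_getElem] using hij
        have h3 := List.nodup_iff_injective_get.1 hnd h2
        exact congrArg Fin.val h3
      have hli : ∀ (i : ℕ) (h : i < l.length + 1),
          (v :: (l ++ [v]))[i]'(by simp; omega) = (v :: l)[i]'(by simp; omega) := by
        intro i h
        cases i with
        | zero => rfl
        | succ i =>
          simp only [List.getElem_cons_succ]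
          exact List.getElem_append_left (by omega)
      have hstep : ∀ (j : ℕ) (hj : j + 1 < l.length + 1),
          ({(v :: l)[j]'(by simp; omega), (v :: l)[j+1]'(by simp; omega)} :
            Finset (Fin m)) ∈ K := by
        intro j hj
        have h := chain_getElem hchain j (by simp; omega)
        rwa [hli j (by omega), hli (j+1) (by omega)] at h
      have hlaststep : ({(v :: l)[l.length]'(by simp), v} : Finset (Fin m)) ∈ K := by
        have h := chain_getElem hchain l.length (by simp)
        rw [hli l.length (by omega)] at h
        have h2 : (v :: (l ++ [v]))[l.length + 1]'(by simp) = v := by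
          simp only [List.getElem_cons_succ]
          simp
        rwa [h2] at h
      have hedges : ∀ i : ZMod (l.length + 1),
          ({f i, f (i + 1)} : Finset (Fin m)) ∈ K := by
        intro i
        have hjlt := ZMod.val_lt i
        have hval1 : (i + 1).val = (i.val + 1) % (l.length + 1) := by
          rw [ZMod.val_add, ZMod.val_one]
        by_cases hj : i.val + 1 < l.length + 1
        · have hv2 : (i + 1).val = i.val + 1 := by rw [hval1, Nat.mod_eq_of_lt hj]
          have h := hstep i.val hj
          show ({(v :: l)[i.val]'_, (v :: l)[(i+1).val]'_} : Finset (Fin m)) ∈ K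
          simp_rw [hv2]
          exact h
        · have hje : i.val = l.length := by omega
          have hv2 : (i + 1).val = 0 := by rw [hval1, hje]; simp
          show ({(v :: l)[i.val]'_, (v :: l)[(i+1).val]'_} : Finset (Fin m)) ∈ K
          simp_rw [hv2, hje]
          simpa using hlaststep
      have main : ∀ (p q : ℕ) (hpq : p < q) (hqlt : q < l.length + 1) (hq1 : q ≠ p + 1)
          (hne0 : ¬(p = 0 ∧ q = l.length)),
          ({(v :: l)[p]'(by simp; omega), (v :: l)[q]'(by simp; omega)} :
            Finset (Fin m)) ∈ K →
          wHom hvert hpc l v v = 𝟙 _ := by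
        intro p q hpq hqlt hq1 hne0 hKpq
        have hq2 : p + 2 ≤ q := by omega
        rcases Nat.eq_zero_or_pos p with rfl | hp1
        · -- chord from the basepoint v
          obtain ⟨q', rfl⟩ : ∃ q', q = q' + 1 := ⟨q - 1, by omega⟩
          have hq'lt : q' < l.length := by omega
          simp only [List.getElem_cons_zero, List.getElem_cons_succ] at hKpq
          have hKvw : ({v, l[q']'hq'lt} : Finset (Fin m)) ∈ K := hKpq
          have hKwv : ({l[q']'hq'lt, v} : Finset (Fin m)) ∈ K := by
            rwa [Finset.pair_comm]
          have hsplit : l = l.take q' ++ l[q']'hq'lt :: l.drop (q' + 1) := by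
            conv_lhs => rw [← List.take_append_drop q' l]
            rw [List.drop_eq_getElem_cons hq'lt]
          have hchain' := hchain
          rw [hsplit, List.append_assoc, List.cons_append] at hchain'
          obtain ⟨CA, CC⟩ := List.isChain_cons_split.1 hchain'
          rw [show wHom hvert hpc l v v =
            wHom hvert hpc (l.take q' ++ l[q']'hq'lt :: l.drop (q' + 1)) v v from by
              rw [← hsplit]]
          rw [wHom_append]
          have hcanc : eHom hvert hpc (l[q']'hq'lt) v ≫ eHom hvert hpc v (l[q']'hq'lt) =
              𝟙 _ := eHom_cancel hvert hpc hdown hKwv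
          rw [insert_inv2 _ _ hcanc, ← wHom_concat, ← wHom_cons]
          rw [ih _ v (by simp [List.length_take]; omega)
              (by rw [List.append_assoc]
                  exact List.isChain_cons_split.2 ⟨CA, List.isChain_pair.2 hKwv⟩),
            ih _ v (by simp [List.length_drop]; omega)
              (by rw [List.cons_append]
                  exact List.chain_cons.2 ⟨hKvw, CC⟩),
            Category.id_comp]
        · -- chord between two non-basepoint vertices
          obtain ⟨p', rfl⟩ : ∃ p', p = p' + 1 := ⟨p - 1, by omega⟩
          obtain ⟨q', rfl⟩ : ∃ q', q = q' + 1 := ⟨q - 1, by omega⟩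
          have hp'lt : p' < l.length := by omega
          have hq'lt : q' < l.length := by omega
          simp only [List.getElem_cons_succ] at hKpq
          have hKuw : ({l[p']'hp'lt, l[q']'hq'lt} : Finset (Fin m)) ∈ K := hKpq
          have hKwu : ({l[q']'hq'lt, l[p']'hp'lt} : Finset (Fin m)) ∈ K := by
            rwa [Finset.pair_comm]
          have hd1 : (l.drop (p' + 1))[q' - p' - 1]'(by simp [List.length_drop]; omega) =
              l[q']'hq'lt := by
            rw [List.getElem_drop]
            congr 1
            omega
          have hsplit2 : l.drop (p' + 1) =
              (l.drop (p' + 1)).take (q' - p' - 1) ++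
                l[q']'hq'lt :: l.drop (q' + 1) := by
            conv_lhs => rw [← List.take_append_drop (q' - p' - 1) (l.drop (p' + 1))]
            congr 1
            rw [List.drop_eq_getElem_cons (by simp [List.length_drop]; omega), hd1,
              List.drop_drop]
            congr 2
            omega
          have hsplit : l = l.take p' ++ l[p']'hp'lt ::
              ((l.drop (p' + 1)).take (q' - p' - 1) ++
                l[q']'hq'lt :: l.drop (q' + 1)) := by
            conv_lhs => rw [← List.take_append_drop p' l]
            rw [List.drop_eq_getElem_cons hp'lt, ← hsplit2]
          have hchain' := hchain
          rw [hsplit, List.append_assoc, List.cons_append, List.append_assoc,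
            List.cons_append] at hchain'
          obtain ⟨CA, Crest⟩ := List.isChain_cons_split.1 hchain'
          obtain ⟨CB, CC⟩ := List.isChain_cons_split.1 Crest
          have hmid : wHom hvert hpc ((l.drop (p' + 1)).take (q' - p' - 1))
              (l[p']'hp'lt) (l[q']'hq'lt) ≫
              eHom hvert hpc (l[q']'hq'lt) (l[p']'hp'lt) = 𝟙 _ := by
            rw [← wHom_concat]
            refine ih _ _ (by simp [List.length_take, List.length_drop]; omega) ?_
            rw [List.append_assoc]
            exact List.isChain_cons_split.2 ⟨CB, List.isChain_pair.2 hKwu⟩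
          rw [show wHom hvert hpc l v v = wHom hvert hpc (l.take p' ++ l[p']'hp'lt ::
              ((l.drop (p' + 1)).take (q' - p' - 1) ++
                l[q']'hq'lt :: l.drop (q' + 1))) v v from by rw [← hsplit]]
          rw [wHom_append, wHom_append]
          have hcanc : eHom hvert hpc (l[q']'hq'lt) (l[p']'hp'lt) ≫
              eHom hvert hpc (l[p']'hp'lt) (l[q']'hq'lt) = 𝟙 _ :=
            eHom_cancel hvert hpc hdown hKwu
          rw [insert_inv _ _ _ hcanc, hmid, Category.id_comp, ← wHom_cons, ← wHom_append]
          refine ih _ v (by simp [List.length_take, List.length_drop]; omega) ?_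
          rw [List.append_assoc, List.cons_append, List.cons_append]
          exact List.isChain_cons_split.2 ⟨CA, List.chain_cons.2 ⟨hKuw, CC⟩⟩
      obtain ⟨i0, j0, h1, h2, h3, hK0⟩ := hchordal (l.length + 1) hN4 f hinj hedges
      have hvne : i0.val ≠ j0.val := fun h => h1 (ZMod.val_injective _ h).symm
      have hfacts : ∀ a b : ZMod (l.length + 1), a.val < b.val → b ≠ a + 1 → a ≠ b + 1 →
          ({f a, f b} : Finset (Fin m)) ∈ K → wHom hvert hpc l v v = 𝟙 _ := by
        intro a b hab hba1 hab1 hKab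
        have hcasta : ((a.val : ℕ) : ZMod (l.length + 1)) = a := ZMod.natCast_rightInverse a
        have hcastb : ((b.val : ℕ) : ZMod (l.length + 1)) = b := ZMod.natCast_rightInverse b
        refine main a.val b.val hab (ZMod.val_lt b) ?_ ?_ hKab
        · intro h
          apply hba1
          rw [← hcastb, h]
          push_cast
          rw [hcasta]
        · rintro ⟨hp0, hqN⟩
          apply hab1
          rw [← hcasta, ← hcastb, hp0, hqN]
          rw [show ((l.length : ℕ) : ZMod (l.length + 1)) + 1 =
            (((l.length + 1 : ℕ)) : ZMod (l.length + 1)) from by push_cast; ring,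
            ZMod.natCast_self]
          simp
      rcases lt_or_gt_of_ne hvne with hlt | hgt
      · exact hfacts i0 j0 hlt h2 h3 hK0
      · exact hfacts j0 i0 hgt h3 h2 (by rwa [Finset.pair_comm])
    · -- duplicated vertex: split the walk
      obtain ⟨x, l₁, l₂, l₃, heq⟩ := exists_dup hnd
      rcases l₁ with _ | ⟨c₀, l₁'⟩
      · rw [List.nil_append] at heq
        injection heq with h1 h2
        subst h1; subst h2
        simp only [List.append_eq] at hlen hchain ⊢
        have hlen' : l₂.length + l₃.length + 1 ≤ k + 1 := by
          simp only [List.length_append, List.length_cons] at hlen; omega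
        rw [List.append_assoc, List.cons_append] at hchain
        obtain ⟨C1, C2⟩ := List.isChain_cons_split.1 hchain
        rw [wHom_append, ih l₂ v (by omega) C1, ih l₃ v (by omega) C2,
          Category.comp_id]
      · injection heq with h1 h2
        subst h1; subst h2
        simp only [List.append_eq] at hlen hchain ⊢
        have hlen' : l₁'.length + l₂.length + l₃.length + 2 ≤ k + 1 := by
          simp only [List.length_append, List.length_cons] at hlen; omega
        simp only [List.append_assoc, List.cons_append] at hchain
        obtain ⟨C1, Crest⟩ := List.isChain_cons_split.1 hchain
        obtain ⟨C2, C3⟩ := List.isChain_cons_split.1 Crest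
        have h1 : wHom hvert hpc ((l₁' ++ x :: l₂) ++ x :: l₃) v v =
            (wHom hvert hpc l₁' v x ≫ wHom hvert hpc l₂ x x) ≫ wHom hvert hpc l₃ x v := by
          rw [wHom_append, wHom_append]
        rw [h1, ih l₂ x (by omega) C2, Category.comp_id, ← wHom_append,
          ih (l₁' ++ x :: l₃) v (by simp; omega)
            (by rw [List.append_assoc, List.cons_append]; exact List.isChain_cons_split.2 ⟨C1, C3⟩)]

end Walks

section Decomp

open CategoryTheory

lemma spoke_mem_suppFace (z : Real3 K) (v : Fin m) (hz : z.1 v ≠ 0) (t : unitInterval) :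
    (spoke hvert z v hz t).1 ∈ facePts (suppFace z) :=
  seg_mem_facePts (mem_facePts_suppFace z) (ept_mem_facePts (mem_suppFace z v hz)) t.2.1 t.2.2

include hdown in
lemma adj_of_support (z : Real3 K) {v w : Fin m} (hv : z.1 v ≠ 0) (hw : z.1 w ≠ 0) :
    ({v, w} : Finset (Fin m)) ∈ K := by
  have hsub : ({v, w} : Finset (Fin m)) ⊆ suppFace z := by
    intro b hb
    rcases Finset.mem_insert.1 hb with rfl | hb
    · exact mem_suppFace z _ hv
    · rw [Finset.mem_singleton.1 hb]
      exact mem_suppFace z _ hw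
  exact edge_fillMF3.1 (fillMF3_down hdown _ (suppFace_mem z) _ hsub)

include hdown in
lemma spoke_merge (z : Real3 K) {v w : Fin m} (hv : z.1 v ≠ 0) (hw : z.1 w ≠ 0) :
    toH (spoke hvert z v hv).symm ≫ toH (spoke hvert z w hw) = eHom hvert hpc v w := by
  have hadj := adj_of_support hdown z hv hw
  rw [eHom_eq hvert hpc hadj, ← toH_trans]
  apply toH_homotopic
  have hvσ : v ∈ suppFace z := mem_suppFace z v hv
  have hwσ : w ∈ suppFace z := mem_suppFace z w hw
  refine homotopic_in_subset (facePts_subset (suppFace_mem z)) (ept v) (ept_mem_facePts hvσ)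
    ((convex_facePts _).starConvex (ept_mem_facePts hvσ)) _ _ (fun t => ?_) (fun t => ?_)
  · have hmem : ((spoke hvert z v hv).symm.trans (spoke hvert z w hw)) t ∈
        Set.range ((spoke hvert z v hv).symm.trans (spoke hvert z w hw)) :=
      Set.mem_range_self t
    rw [Path.trans_range] at hmem
    rcases hmem with ⟨s, hs⟩ | ⟨s, hs⟩
    · rw [← hs]
      exact spoke_mem_suppFace hvert z v hv (unitInterval.symm s)
    · rw [← hs]
      exact spoke_mem_suppFace hvert z w hw s
  · exact epath_mem_facePts hvert hadj hvσ hwσ t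

lemma path_cast_rfl {x y : Real3 K} (q : Path x y) : q.cast rfl rfl = q := by
  ext t
  rfl

lemma toH_cast {x y x' y' : Real3 K} (q : Path x y) (hx : x' = x) (hy : y' = y) :
    toH (q.cast hx hy) =
      eqToHom (show FundamentalGroupoid.mk x' = FundamentalGroupoid.mk x by rw [hx]) ≫
        toH q ≫
      eqToHom (show FundamentalGroupoid.mk y = FundamentalGroupoid.mk y' by rw [hy]) := by
  subst hx; subst hy
  rw [eqToHom_refl, eqToHom_refl, Category.id_comp, Category.comp_id]
  exact congrArg toH (path_cast_rfl q)

lemma spoke_congr {z z' : Real3 K} (h : z = z') (v : Fin m) (hv : z.1 v ≠ 0)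
    (hv' : z'.1 v ≠ 0) :
    toH (spoke hvert z v hv) =
      eqToHom (show FundamentalGroupoid.mk z = FundamentalGroupoid.mk z' by rw [h]) ≫
        toH (spoke hvert z' v hv') := by
  subst h
  rw [eqToHom_refl, Category.id_comp]

lemma spoke_symm_congr {z z' : Real3 K} (h : z = z') (v : Fin m) (hv : z.1 v ≠ 0)
    (hv' : z'.1 v ≠ 0) :
    toH (spoke hvert z v hv).symm ≫
      eqToHom (show FundamentalGroupoid.mk z = FundamentalGroupoid.mk z' by rw [h]) =
      toH (spoke hvert z' v hv').symm := by
  subst h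
  rw [eqToHom_refl, Category.comp_id]

include hvert in
lemma homotopic_in_star {v : Fin m} {x y : Real3 K} (p q : Path x y)
    (hp : ∀ t, (p t).1 ∈ starPts (fillMF3 K) v)
    (hq : ∀ t, (q t).1 ∈ starPts (fillMF3 K) v) :
    p.Homotopic q :=
  homotopic_in_subset Set.inter_subset_left (ept v)
    ⟨(vpt hvert v).2, by simp [ept]⟩ (starConvex_starPts v) p q hp hq

include hdown in
lemma path_decomp {x y : Real3 K} (p : Path x y) :
    ∃ (v w : Fin m) (hv : x.1 v ≠ 0) (hw : y.1 w ≠ 0) (l : List (Fin m)),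
      List.Chain (fun a b => ({a, b} : Finset (Fin m)) ∈ K) v (l ++ [w]) ∧
      toH p = toH (spoke hvert x v hv) ≫ wHom hvert hpc l v w ≫
        toH (spoke hvert y w hw).symm := by
  classical
  set c : Fin m → Set unitInterval :=
    fun v' => p ⁻¹' {z : Real3 K | z.1 v' ≠ 0} with hcdef
  have hcopen : ∀ v', IsOpen (c v') := fun v' =>
    (isOpen_ne.preimage ((continuous_apply v').comp continuous_subtype_val)).preimage
      p.continuous
  have hccov : Set.univ ⊆ ⋃ v', c v' := by
    intro s _
    obtain ⟨i, hi⟩ := exists_support_index (p s).2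
    exact Set.mem_iUnion.2 ⟨i, hi⟩
  obtain ⟨t, ht0, htmono, ⟨NN, htN⟩, hex⟩ :=
    exists_monotone_Icc_subset_open_cover_unitInterval hcopen hccov
  choose vv hvv using hex
  have hleft : ∀ n, (p (t n)).1 (vv n) ≠ 0 := fun n =>
    hvv n ⟨le_rfl, htmono (Nat.le_succ n)⟩
  have hright : ∀ n, (p (t (n+1))).1 (vv n) ≠ 0 := fun n =>
    hvv n ⟨htmono (Nat.le_succ n), le_rfl⟩
  have piece : ∀ n, toH (truncP p (t n) (t (n+1)) (htmono (Nat.le_succ n))) =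
      toH (spoke hvert (p (t n)) (vv n) (hleft n)) ≫
        toH (spoke hvert (p (t (n+1))) (vv n) (hright n)).symm := by
    intro n
    rw [← toH_trans]
    apply toH_homotopic
    apply homotopic_in_star hvert
    · intro s
      obtain ⟨u, hu1, hu2, hu3⟩ := truncP_apply p _ _ (htmono (Nat.le_succ n)) s
      rw [hu3]
      exact ⟨(p u).2, hvv n ⟨hu1, hu2⟩⟩
    · intro s
      have hmem : ((spoke hvert (p (t n)) (vv n) (hleft n)).trans
          (spoke hvert (p (t (n+1))) (vv n) (hright n)).symm) s ∈
          Set.range ((spoke hvert (p (t n)) (vv n) (hleft n)).trans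
          (spoke hvert (p (t (n+1))) (vv n) (hright n)).symm) := Set.mem_range_self s
      rw [Path.trans_range] at hmem
      rcases hmem with ⟨s', hs⟩ | ⟨s', hs⟩
      · rw [← hs]
        exact spoke_mem_star hvert (p (t n)) (vv n) (hleft n) s'
      · rw [← hs]
        exact spoke_mem_star hvert (p (t (n+1))) (vv n) (hright n) (unitInterval.symm s')
  have main : ∀ n : ℕ, ∃ l : List (Fin m),
      List.Chain (fun a b => ({a, b} : Finset (Fin m)) ∈ K) (vv 0) (l ++ [vv n]) ∧
      toH (truncP p (t 0) (t (n+1)) (htmono (Nat.zero_le _))) =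
        toH (spoke hvert (p (t 0)) (vv 0) (hleft 0)) ≫
          wHom hvert hpc l (vv 0) (vv n) ≫
          toH (spoke hvert (p (t (n+1))) (vv n) (hright n)).symm := by
    intro n
    induction n with
    | zero =>
      refine ⟨[], List.isChain_pair.2 (by
        rw [show ({vv 0, vv 0} : Finset (Fin m)) = {vv 0} from by ext b; simp]
        exact hvert (vv 0)), ?_⟩
      rw [piece 0, wHom_nil, eHom_self hvert hpc (vv 0), Category.id_comp]
    | succ n ihn =>
      obtain ⟨l, hchl, hQ⟩ := ihn
      have hadj : ({vv n, vv (n+1)} : Finset (Fin m)) ∈ K :=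
        adj_of_support hdown (p (t (n+1))) (hright n) (hleft (n+1))
      refine ⟨l ++ [vv n], ?_, ?_⟩
      · rw [List.append_assoc]
        exact List.isChain_cons_split.2 ⟨hchl, List.isChain_pair.2 hadj⟩
      · have h1 : toH (truncP p (t 0) (t (n+2)) (htmono (Nat.zero_le _))) =
            toH (truncP p (t 0) (t (n+1)) (htmono (Nat.zero_le _))) ≫
            toH (truncP p (t (n+1)) (t (n+2)) (htmono (Nat.le_succ _))) := by
          rw [← toH_trans]
          apply toH_homotopic
          rw [truncP_split p (t 0) (t (n+1)) (t (n+2)) (htmono (Nat.zero_le _))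
            (htmono (Nat.le_succ _))]
          exact ⟨Path.Homotopy.reparam _ _ _ _ _⟩
        rw [h1, hQ, piece (n+1), wHom_concat]
        have hm := spoke_merge hvert hpc hdown (p (t (n+1))) (hright n) (hleft (n+1))
        simp only [Category.assoc]
        rw [← hm]
        simp only [Category.assoc]
  obtain ⟨l, hch, hQ⟩ := main NN
  have e0 : p (t 0) = x := by rw [ht0]; exact p.source
  have e1 : p (t (NN+1)) = y := by rw [htN (NN+1) (Nat.le_succ NN)]; exact p.target
  have hv' : x.1 (vv 0) ≠ 0 := by rw [← e0]; exact hleft 0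
  have hw' : y.1 (vv NN) ≠ 0 := by rw [← e1]; exact hright NN
  refine ⟨vv 0, vv NN, hv', hw', l, hch, ?_⟩
  have hcast : p = (truncP p (t 0) (t (NN+1)) (htmono (Nat.zero_le _))).cast e0.symm e1.symm := by
    apply Path.ext
    funext s
    show p s = p.extend (min (max ↑s ↑(t 0)) ↑(t (NN+1)))
    rw [show ((t 0 : unitInterval) : ℝ) = 0 from congrArg _ ht0,
      show ((t (NN+1) : unitInterval) : ℝ) = 1 from congrArg _ (htN _ (Nat.le_succ NN)),
      max_eq_left s.2.1, min_eq_left s.2.2, p.extend_extends']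
  have hA := spoke_congr hvert e0.symm (vv 0) hv' (hleft 0)
  have hB := spoke_symm_congr hvert e1 (vv NN) (hright NN) hw'
  rw [hA, ← hB]
  conv_lhs => rw [hcast]
  rw [toH_cast, hQ]
  simp only [Category.assoc]

variable (hchordal : ∀ n : ℕ, 4 ≤ n → ∀ f : ZMod n → Fin m, Function.Injective f →
      (∀ i : ZMod n, ({f i, f (i + 1)} : Finset (Fin m)) ∈ K) →
      ∃ i j : ZMod n, j ≠ i ∧ j ≠ i + 1 ∧ i ≠ j + 1 ∧
        ({f i, f j} : Finset (Fin m)) ∈ K)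

include hvert hpc hdown hchordal in
lemma toH_loop {z : Real3 K} (p : Path z z) : toH p = 𝟙 _ := by
  obtain ⟨v, w, hv, hw, l, hch, hdec⟩ := path_decomp hvert hpc hdown p
  have hwv : ({w, v} : Finset (Fin m)) ∈ K := adj_of_support hdown z hw hv
  have hm := spoke_merge hvert hpc hdown z hw hv
  have hcl : wHom hvert hpc (l ++ [w]) v v = 𝟙 _ := by
    refine wHom_closed hvert hpc hdown hchordal (l ++ [w]).length _ v le_rfl ?_
    rw [List.append_assoc]
    exact List.isChain_cons_split.2 ⟨hch, List.isChain_pair.2 hwv⟩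
  calc toH p = toH (spoke hvert z v hv) ≫ wHom hvert hpc l v w ≫
        toH (spoke hvert z w hw).symm := hdec
    _ = toH (spoke hvert z v hv) ≫ wHom hvert hpc l v w ≫
        ((toH (spoke hvert z w hw).symm ≫ toH (spoke hvert z v hv)) ≫
          toH (spoke hvert z v hv).symm) := by
        rw [Category.assoc, toH_comp_symm, Category.comp_id]
    _ = toH (spoke hvert z v hv) ≫ wHom hvert hpc l v w ≫
        (eHom hvert hpc w v ≫ toH (spoke hvert z v hv).symm) := by
        rw [hm]
    _ = toH (spoke hvert z v hv) ≫ wHom hvert hpc (l ++ [w]) v v ≫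
        toH (spoke hvert z v hv).symm := by
        rw [show wHom hvert hpc l v w ≫ (eHom hvert hpc w v ≫
            toH (spoke hvert z v hv).symm) = (wHom hvert hpc l v w ≫
            eHom hvert hpc w v) ≫ toH (spoke hvert z v hv).symm from
          (Category.assoc _ _ _).symm, ← wHom_concat]
    _ = 𝟙 _ := by
        rw [hcl, Category.id_comp, toH_comp_symm]

end Decomp
end FG

end Stmt18

attribute [local instance] Path.Homotopic.setoid

open Stmt18 in
open CategoryTheory in
theorem stmt18 {m : ℕ} (K : Finset (Finset (Fin m)))
    (hdown : ∀ σ ∈ K, ∀ τ ⊆ σ, τ ∈ K)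
    (hvert : ∀ i : Fin m, ({i} : Finset (Fin m)) ∈ K)
    -- `K` is connected
    (hconn : ConnectedSpace ↥(realization K))
    -- the 1-skeleton of `K` is chordal
    (hchordal : ∀ n : ℕ, 4 ≤ n → ∀ f : ZMod n → Fin m, Function.Injective f →
      (∀ i : ZMod n, ({f i, f (i + 1)} : Finset (Fin m)) ∈ K) →
      ∃ i j : ZMod n, j ≠ i ∧ j ≠ i + 1 ∧ i ≠ j + 1 ∧
        ({f i, f j} : Finset (Fin m)) ∈ K) :
    SimplyConnectedSpace ↥(realization (fillMF3 K)) := by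

  classical
  have hpc : PathConnectedSpace (Real3 K) := pathConnected_real3 hvert hconn
  rw [simply_connected_iff_paths_homotopic]
  refine ⟨hpc, fun x y => ⟨fun P Q => ?_⟩⟩
  obtain ⟨p, rfl⟩ := Quotient.exists_rep P
  obtain ⟨q, rfl⟩ := Quotient.exists_rep Q
  have h1 : toH (p.trans q.symm) = 𝟙 _ := toH_loop hvert hpc hdown hchordal _
  rw [toH_trans] at h1
  have h2 : (toH p ≫ toH q.symm) ≫ toH q = 𝟙 _ ≫ toH q := by rw [h1]
  rw [CategoryTheory.Category.assoc, toH_symm_comp, CategoryTheory.Category.comp_id,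
    CategoryTheory.Category.id_comp] at h2
  exact h2
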